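/- Let n > 2k ≥ 4 be integers. If F is an intersecting family of k-subsets of [n] that is non-trivial (the intersection of all members of F is empty), then |F| ≤ C(n-1, k-1) - C(n-k-1, k-1) + 1. -/

import Mathlib

open Finset
namespace HM



/-- replace `j` by `i` in a set -/
def phi (i j : ℕ) (S : Finset ℕ) : Finset ℕ := insert i (S.erase j)

/-- cross-intersecting families -/
def CrossInt (A B : Finset (Finset ℕ)) : Prop := ∀ S ∈ A, ∀ T ∈ B, (S ∩ T).Nonempty

/-- shifted (compressed) family relative to ground set `G` -/
def ShiftedOn (G : Finset ℕ) (A : Finset (Finset ℕ)) : Prop :=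
  ∀ i ∈ G, ∀ j ∈ G, i < j → ∀ S ∈ A, j ∈ S → i ∉ S → phi i j S ∈ A

def moved (i j : ℕ) (A : Finset (Finset ℕ)) : Finset (Finset ℕ) :=
  A.filter fun S => j ∈ S ∧ i ∉ S ∧ phi i j S ∉ A

def shiftFam (i j : ℕ) (A : Finset (Finset ℕ)) : Finset (Finset ℕ) :=
  (A \ moved i j A) ∪ (moved i j A).image (phi i j)

def wt (S : Finset ℕ) : ℕ := S.sum id
def mu (A : Finset (Finset ℕ)) : ℕ := A.sum wt

lemma phi_card {i j : ℕ} {S : Finset ℕ} (hj : j ∈ S) (hi : i ∉ S) :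
    (phi i j S).card = S.card := by
  have : i ∉ S.erase j := fun h => hi (mem_of_mem_erase h)
  rw [phi, card_insert_of_notMem this, card_erase_of_mem hj]
  have := card_pos.2 ⟨j, hj⟩
  omega

lemma mem_phi_self {i j : ℕ} {S : Finset ℕ} : i ∈ phi i j S := mem_insert_self _ _

lemma not_mem_phi {i j : ℕ} {S : Finset ℕ} (hij : i ≠ j) : j ∉ phi i j S := by
  simp [phi, hij.symm, Ne.symm hij]

lemma phi_subset {i j : ℕ} {S G : Finset ℕ} (hS : S ⊆ G) (hiG : i ∈ G) :
    phi i j S ⊆ G := by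
  intro x hx
  rcases mem_insert.1 hx with rfl | hx
  · exact hiG
  · exact hS (mem_of_mem_erase hx)

lemma phi_recover {i j : ℕ} {S : Finset ℕ} (hj : j ∈ S) (hi : i ∉ S) :
    insert j ((phi i j S).erase i) = S := by
  have : i ∉ S.erase j := fun h => hi (mem_of_mem_erase h)
  rw [phi, erase_insert this, insert_erase hj]

lemma phi_injOn {i j : ℕ} {S T : Finset ℕ} (hjS : j ∈ S) (hiS : i ∉ S)
    (hjT : j ∈ T) (hiT : i ∉ T) (h : phi i j S = phi i j T) : S = T := by
  rw [← phi_recover hjS hiS, ← phi_recover hjT hiT, h]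

lemma wt_phi_add {i j : ℕ} {S : Finset ℕ} (hj : j ∈ S) (hi : i ∉ S) :
    wt (phi i j S) + j = wt S + i := by
  have hi' : i ∉ S.erase j := fun h => hi (mem_of_mem_erase h)
  have h1 : wt (phi i j S) = i + wt (S.erase j) := by
    rw [phi, wt, sum_insert hi']; rfl
  have h2 : wt (S.erase j) + j = wt S := sum_erase_add S id hj
  omega

lemma mem_shiftFam {i j : ℕ} {A : Finset (Finset ℕ)} {T : Finset ℕ} :
    T ∈ shiftFam i j A ↔ (T ∈ A ∧ T ∉ moved i j A) ∨ (∃ S ∈ moved i j A, phi i j S = T) := by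
  simp [shiftFam, mem_union, mem_sdiff, mem_image]

lemma mem_moved {i j : ℕ} {A : Finset (Finset ℕ)} {S : Finset ℕ} :
    S ∈ moved i j A ↔ S ∈ A ∧ j ∈ S ∧ i ∉ S ∧ phi i j S ∉ A := by
  simp [moved, mem_filter, and_assoc]

lemma card_shiftFam (i j : ℕ) (A : Finset (Finset ℕ)) (hij : i ≠ j) :
    (shiftFam i j A).card = A.card := by
  have hdisj : Disjoint (A \ moved i j A) ((moved i j A).image (phi i j)) := by
    rw [disjoint_right]
    intro T hT hT'
    obtain ⟨S, hS, rfl⟩ := mem_image.1 hT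
    have := (mem_moved.1 hS).2.2.2
    exact this (mem_sdiff.1 hT').1
  rw [shiftFam, card_union_of_disjoint hdisj, card_image_of_injOn, card_sdiff_of_subset (show moved i j A ⊆ A from filter_subset _ _)]
  · have : (moved i j A).card ≤ A.card := card_le_card (show moved i j A ⊆ A from filter_subset _ _)
    omega
  · intro S hS T hT h
    have hS' := mem_moved.1 hS
    have hT' := mem_moved.1 hT
    exact phi_injOn hS'.2.1 hS'.2.2.1 hT'.2.1 hT'.2.2.1 h

lemma shiftFam_subset_powersetCard {i j r : ℕ} {G : Finset ℕ} {A : Finset (Finset ℕ)}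
    (hA : A ⊆ powersetCard r G) (hiG : i ∈ G) :
    shiftFam i j A ⊆ powersetCard r G := by
  intro T hT
  rcases mem_shiftFam.1 hT with ⟨h, _⟩ | ⟨S, hS, rfl⟩
  · exact hA h
  · have hS' := mem_moved.1 hS
    have h0 := hA hS'.1
    rw [mem_powersetCard] at h0 ⊢
    exact ⟨phi_subset h0.1 hiG, by rw [phi_card hS'.2.1 hS'.2.2.1]; exact h0.2⟩

lemma mu_shiftFam_le (i j : ℕ) (A : Finset (Finset ℕ)) (hij : i < j) :
    mu (shiftFam i j A) + (moved i j A).card ≤ mu A := by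
  have hdisj : Disjoint (A \ moved i j A) ((moved i j A).image (phi i j)) := by
    rw [disjoint_right]
    intro T hT hT'
    obtain ⟨S, hS, rfl⟩ := mem_image.1 hT
    exact (mem_moved.1 hS).2.2.2 (mem_sdiff.1 hT').1
  have hinj : Set.InjOn (phi i j) (moved i j A) := by
    intro S hS T hT h
    have hS' := mem_moved.1 hS
    have hT' := mem_moved.1 hT
    exact phi_injOn hS'.2.1 hS'.2.2.1 hT'.2.1 hT'.2.2.1 h
  have h1 : mu (shiftFam i j A) = (A \ moved i j A).sum wt + ((moved i j A).image (phi i j)).sum wt := by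
    rw [shiftFam, mu, sum_union hdisj]
  have h2 : ((moved i j A).image (phi i j)).sum wt = (moved i j A).sum (fun S => wt (phi i j S)) :=
    sum_image hinj
  have h3 : ∀ S ∈ moved i j A, wt (phi i j S) + 1 ≤ wt S := by
    intro S hS
    have hS' := mem_moved.1 hS
    have := wt_phi_add hS'.2.1 hS'.2.2.1
    omega
  have h4 : (moved i j A).sum (fun S => wt (phi i j S)) + (moved i j A).card ≤ (moved i j A).sum wt := by
    calc (moved i j A).sum (fun S => wt (phi i j S)) + (moved i j A).card
        = (moved i j A).sum (fun S => wt (phi i j S) + 1) := by rw [sum_add_distrib, sum_const, smul_eq_mul, mul_one]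
      _ ≤ (moved i j A).sum wt := sum_le_sum h3
  have h5 : mu A = (A \ moved i j A).sum wt + (moved i j A).sum wt := by
    rw [mu, ← sum_union sdiff_disjoint,
      sdiff_union_of_subset (show moved i j A ⊆ A from filter_subset _ _)]
  omega



lemma crossInt_symm {A B : Finset (Finset ℕ)} (h : CrossInt A B) : CrossInt B A := by
  intro S hS T hT
  obtain ⟨x, hx⟩ := h T hT S hS
  exact ⟨x, by rw [mem_inter] at hx ⊢; exact ⟨hx.2, hx.1⟩⟩

/-- key case of cross-intersecting preservation -/
private lemma cross_shift_aux {i j : ℕ} (hij : i < j) {A B : Finset (Finset ℕ)}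
    (hX : CrossInt A B) {S T' : Finset ℕ} (hS : S ∈ moved i j A)
    (hT' : T' ∈ B ∧ T' ∉ moved i j B) : ((phi i j S) ∩ T').Nonempty := by
  have hS' := mem_moved.1 hS
  obtain ⟨x, hx⟩ := hX S hS'.1 T' hT'.1
  rw [mem_inter] at hx
  by_cases hxj : x = j
  · -- x = j : j ∈ T'
    have hjT : j ∈ T' := hxj ▸ hx.2
    by_cases hiT : i ∈ T'
    · exact ⟨i, mem_inter.2 ⟨mem_phi_self, hiT⟩⟩
    · -- T' not moved, j ∈ T', i ∉ T' ⇒ phi i j T' ∈ B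
      have hphiT : phi i j T' ∈ B := by
        by_contra h
        exact hT'.2 (mem_moved.2 ⟨hT'.1, hjT, hiT, h⟩)
      obtain ⟨y, hy⟩ := hX S hS'.1 _ hphiT
      rw [mem_inter] at hy
      rcases mem_insert.1 hy.2 with rfl | hy2
      · exact absurd hy.1 hS'.2.2.1
      · exact ⟨y, mem_inter.2 ⟨mem_insert.2 (Or.inr (mem_erase.2 ⟨(mem_erase.1 hy2).1, hy.1⟩)),
          mem_of_mem_erase hy2⟩⟩
  · exact ⟨x, mem_inter.2 ⟨mem_insert.2 (Or.inr (mem_erase.2 ⟨hxj, hx.1⟩)), hx.2⟩⟩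

lemma crossInt_shiftFam {i j : ℕ} (hij : i < j) {A B : Finset (Finset ℕ)}
    (hX : CrossInt A B) : CrossInt (shiftFam i j A) (shiftFam i j B) := by
  intro S' hS' T' hT'
  rcases mem_shiftFam.1 hS' with hS1 | ⟨S, hS, rfl⟩ <;>
    rcases mem_shiftFam.1 hT' with hT1 | ⟨T, hT, rfl⟩
  · exact hX _ hS1.1 _ hT1.1
  · obtain ⟨x, hx⟩ := cross_shift_aux hij (crossInt_symm hX) hT hS1
    rw [mem_inter] at hx
    exact ⟨x, mem_inter.2 ⟨hx.2, hx.1⟩⟩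
  · exact cross_shift_aux hij hX hS hT1
  · exact ⟨i, mem_inter.2 ⟨mem_phi_self, mem_phi_self⟩⟩

/-- counting: a star is small -/
lemma card_star_le {G : Finset ℕ} {r x : ℕ} {H : Finset (Finset ℕ)}
    (hH : H ⊆ powersetCard r G) (hx : ∀ S ∈ H, x ∈ S) :
    H.card ≤ (G.card - 1).choose (r - 1) := by
  rcases H.eq_empty_or_nonempty with rfl | ⟨S₀, hS₀⟩
  · simp
  have hxG : x ∈ G := (mem_powersetCard.1 (hH hS₀)).1 (hx _ hS₀)
  have : H.card ≤ (powersetCard (r-1) (G.erase x)).card := by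
    apply card_le_card_of_injOn (fun S => S.erase x)
    · intro S hS
      have h0 := mem_powersetCard.1 (hH hS)
      simp only [Finset.mem_coe, mem_powersetCard]
      constructor
      · exact erase_subset_erase _ h0.1
      · rw [card_erase_of_mem (hx _ hS), h0.2]
    · intro S hS T hT h
      have h' : S.erase x = T.erase x := h
      rw [← insert_erase (hx _ hS), ← insert_erase (hx _ hT), h']
  rwa [card_powersetCard, card_erase_of_mem hxG] at this

/-- counting: families whose members all meet `D` -/
lemma card_meets_le {G D : Finset ℕ} {r : ℕ} {H : Finset (Finset ℕ)}
    (hH : H ⊆ powersetCard r G) (hD : D ⊆ G)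
    (hmeet : ∀ S ∈ H, (S ∩ D).Nonempty) :
    H.card ≤ G.card.choose r - (G.card - D.card).choose r := by
  have hsub : H ⊆ powersetCard r G \ powersetCard r (G \ D) := by
    intro S hS
    rw [mem_sdiff]
    refine ⟨hH hS, fun h => ?_⟩
    obtain ⟨x, hx⟩ := hmeet S hS
    rw [mem_inter] at hx
    have := (mem_powersetCard.1 h).1 hx.1
    exact (mem_sdiff.1 this).2 hx.2
  calc H.card ≤ (powersetCard r G \ powersetCard r (G \ D)).card := card_le_card hsub
    _ = G.card.choose r - (G.card - D.card).choose r := by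
        rw [card_sdiff_of_subset (powersetCard_mono sdiff_subset), card_powersetCard, card_powersetCard,
          card_sdiff_of_subset hD]

/-- counting: sets containing two fixed elements -/
lemma card_two_star_le {G : Finset ℕ} {r i j : ℕ} {H : Finset (Finset ℕ)} (hij : i ≠ j)
    (hH : H ⊆ powersetCard r G) (hx : ∀ S ∈ H, i ∈ S ∧ j ∈ S) :
    H.card ≤ (G.card - 2).choose (r - 2) := by
  rcases H.eq_empty_or_nonempty with rfl | ⟨S₀, hS₀⟩
  · simp
  have hiG : i ∈ G := (mem_powersetCard.1 (hH hS₀)).1 (hx _ hS₀).1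
  have hjG : j ∈ G := (mem_powersetCard.1 (hH hS₀)).1 (hx _ hS₀).2
  have : H.card ≤ (powersetCard (r-2) ((G.erase i).erase j)).card := by
    apply card_le_card_of_injOn (fun S => (S.erase i).erase j)
    · intro S hS
      have h0 := mem_powersetCard.1 (hH hS)
      simp only [Finset.mem_coe, mem_powersetCard]
      constructor
      · exact erase_subset_erase _ (erase_subset_erase _ h0.1)
      · rw [card_erase_of_mem (mem_erase.2 ⟨Ne.symm hij, (hx _ hS).2⟩),
          card_erase_of_mem (hx _ hS).1, h0.2]
        omega
    · intro S hS T hT h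
      have recov : ∀ U ∈ H, insert i (insert j ((U.erase i).erase j)) = U := by
        intro U hU
        rw [insert_erase (mem_erase.2 ⟨Ne.symm hij, (hx _ hU).2⟩), insert_erase (hx _ hU).1]
      have h' : (S.erase i).erase j = (T.erase i).erase j := h
      rw [← recov S hS, ← recov T hT, h']
  rwa [card_powersetCard, card_erase_of_mem (mem_erase.2 ⟨Ne.symm hij, hjG⟩),
    card_erase_of_mem hiG] at this

/-- pairing via complements -/
lemma two_mul_card_le {G : Finset ℕ} {W H : Finset (Finset ℕ)}
    (hHW : H ⊆ W) (hWsub : ∀ S ∈ W, S ⊆ G) (hιW : ∀ S ∈ W, G \ S ∈ W)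
    (hdisj : ∀ S ∈ H, G \ S ∉ H) :
    2 * H.card ≤ W.card := by
  have hinj : Set.InjOn (fun S => G \ S) H := by
    intro S hS T hT h
    have hrec : ∀ U ∈ H, G \ (G \ U) = U := by
      intro U hU
      exact sdiff_sdiff_right_self.trans (inf_eq_right.2 (hWsub _ (hHW hU)))
    rw [← hrec S hS, ← hrec T hT]; simp only at h; rw [h]
  have hd : Disjoint H (H.image (fun S => G \ S)) := by
    rw [disjoint_right]
    intro T hT hT'
    obtain ⟨S, hS, rfl⟩ := mem_image.1 hT
    exact hdisj S hS hT'
  have hu : H ∪ H.image (fun S => G \ S) ⊆ W := by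
    apply union_subset hHW
    intro T hT
    obtain ⟨S, hS, rfl⟩ := mem_image.1 hT
    exact hιW _ (hHW hS)
  have := card_le_card hu
  rw [card_union_of_disjoint hd, card_image_of_injOn hinj] at this
  omega



/-- members not containing `b` -/
def belowFam (b : ℕ) (A : Finset (Finset ℕ)) : Finset (Finset ℕ) := A.filter fun S => b ∉ S
/-- links of members containing `b` -/
def topFam (b : ℕ) (A : Finset (Finset ℕ)) : Finset (Finset ℕ) :=
  (A.filter fun S => b ∈ S).image fun S => S.erase b

lemma mem_topFam {b : ℕ} {A : Finset (Finset ℕ)} {T : Finset ℕ} :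
    T ∈ topFam b A ↔ b ∉ T ∧ insert b T ∈ A := by
  constructor
  · rintro hT
    obtain ⟨S, hS, rfl⟩ := mem_image.1 hT
    have hS' := mem_filter.1 hS
    exact ⟨notMem_erase _ _, by rw [insert_erase hS'.2]; exact hS'.1⟩
  · rintro ⟨h1, h2⟩
    exact mem_image.2 ⟨insert b T, mem_filter.2 ⟨h2, mem_insert_self _ _⟩, by
      rw [erase_insert h1]⟩

lemma card_peel (b : ℕ) (A : Finset (Finset ℕ)) :
    A.card = (belowFam b A).card + (topFam b A).card := by
  have h1 : (topFam b A).card = (A.filter fun S => b ∈ S).card := by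
    apply card_image_of_injOn
    intro S hS T hT h
    have h' : S.erase b = T.erase b := h
    rw [← insert_erase (mem_filter.1 hS).2, ← insert_erase (mem_filter.1 hT).2, h']
  have := card_filter_add_card_filter_not (s := A) (p := fun S => b ∈ S)
  rw [belowFam, h1]
  omega

lemma belowFam_subset {b r : ℕ} {G : Finset ℕ} {A : Finset (Finset ℕ)}
    (hA : A ⊆ powersetCard r G) : belowFam b A ⊆ powersetCard r (G.erase b) := by
  intro S hS
  have hS' := mem_filter.1 hS
  have h0 := mem_powersetCard.1 (hA hS'.1)
  exact mem_powersetCard.2 ⟨subset_erase.2 ⟨h0.1, hS'.2⟩, h0.2⟩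

lemma topFam_subset {b r : ℕ} {G : Finset ℕ} {A : Finset (Finset ℕ)}
    (hA : A ⊆ powersetCard r G) : topFam b A ⊆ powersetCard (r - 1) (G.erase b) := by
  intro T hT
  obtain ⟨h1, h2⟩ := mem_topFam.1 hT
  have h0 := mem_powersetCard.1 (hA h2)
  refine mem_powersetCard.2 ⟨subset_erase.2 ⟨fun x hx => h0.1 (mem_insert_of_mem hx), h1⟩, ?_⟩
  have : (insert b T).card = T.card + 1 := card_insert_of_notMem h1
  omega

lemma shiftedOn_belowFam {b : ℕ} {G : Finset ℕ} {A : Finset (Finset ℕ)}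
    (hSh : ShiftedOn G A) : ShiftedOn (G.erase b) (belowFam b A) := by
  intro i hi j hj hij S hS hjS hiS
  have hS' := mem_filter.1 hS
  refine mem_filter.2 ⟨hSh i (mem_of_mem_erase hi) j (mem_of_mem_erase hj) hij S hS'.1 hjS hiS, ?_⟩
  intro hb
  rcases mem_insert.1 hb with rfl | hb
  · exact (mem_erase.1 hi).1 rfl
  · exact hS'.2 (mem_of_mem_erase hb)

lemma shiftedOn_topFam {b : ℕ} {G : Finset ℕ} {A : Finset (Finset ℕ)}
    (hSh : ShiftedOn G A) (hbG : b ∈ G) : ShiftedOn (G.erase b) (topFam b A) := by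
  intro i hi j hj hij T hT hjT hiT
  obtain ⟨h1, h2⟩ := mem_topFam.1 hT
  have hib : i ≠ b := (mem_erase.1 hi).1
  have hjb : j ≠ b := (mem_erase.1 hj).1
  have hphi : phi i j (insert b T) ∈ A := by
    apply hSh i (mem_of_mem_erase hi) j (mem_of_mem_erase hj) hij _ h2
      (mem_insert_of_mem hjT)
    intro h
    rcases mem_insert.1 h with rfl | h
    · exact hib rfl
    · exact hiT h
  have heq : phi i j (insert b T) = insert b (phi i j T) := by
    rw [phi, phi, erase_insert_of_ne (Ne.symm hjb), Finset.insert_comm]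
  refine mem_topFam.2 ⟨?_, heq ▸ hphi⟩
  intro h
  rcases mem_insert.1 h with rfl | h
  · exact hib rfl
  · exact h1 (mem_of_mem_erase h)

/-- top links of cross-intersecting shifted families remain cross-intersecting -/
lemma crossInt_topFam {b r : ℕ} {G : Finset ℕ} {A B : Finset (Finset ℕ)}
    (hA : A ⊆ powersetCard r G) (hB : B ⊆ powersetCard r G)
    (hShA : ShiftedOn G A) (hX : CrossInt A B) (h2r : 2 * r ≤ G.card)
    (hbG : b ∈ G) (hbmax : ∀ x ∈ G, x ≤ b) :
    CrossInt (topFam b A) (topFam b B) := by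
  intro S'' hS'' T'' hT''
  by_contra hne
  rw [not_nonempty_iff_eq_empty] at hne
  obtain ⟨hbS, hSA⟩ := mem_topFam.1 hS''
  obtain ⟨hbT, hTB⟩ := mem_topFam.1 hT''
  set S := insert b S'' with hSdef
  set T := insert b T'' with hTdef
  have hSG := mem_powersetCard.1 (hA hSA)
  have hTG := mem_powersetCard.1 (hB hTB)
  -- find x ∈ G \ (S ∪ T)
  have hcard : (S ∪ T).card < G.card := by
    have h1 : (S ∪ T).card + (S ∩ T).card = S.card + T.card := card_union_add_card_inter S T
    have h2 : 0 < (S ∩ T).card := card_pos.2 ⟨b, mem_inter.2 ⟨mem_insert_self _ _, mem_insert_self _ _⟩⟩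
    omega
  have hST : S ∪ T ⊆ G := union_subset hSG.1 hTG.1
  have : 0 < (G \ (S ∪ T)).card := by
    rw [card_sdiff_of_subset hST]; omega
  obtain ⟨x, hx⟩ := card_pos.1 this
  rw [mem_sdiff] at hx
  have hxb : x < b := by
    rcases (hbmax x hx.1).lt_or_eq with h | rfl
    · exact h
    · exact absurd (mem_union_left _ (mem_insert_self _ _)) hx.2
  have hxS : x ∉ S := fun h => hx.2 (mem_union_left _ h)
  have hxT : x ∉ T := fun h => hx.2 (mem_union_right _ h)
  have hphi : phi x b S ∈ A :=
    hShA x hx.1 b hbG hxb S hSA (mem_insert_self _ _) hxS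
  obtain ⟨y, hy⟩ := hX _ hphi T hTB
  rw [mem_inter] at hy
  rcases mem_insert.1 hy.1 with rfl | hy1
  · exact hxT hy.2
  · have hyb : y ≠ b := (mem_erase.1 hy1).1
    have hyS'' : y ∈ S'' := by
      have := mem_of_mem_erase hy1
      rcases mem_insert.1 this with rfl | h
      · exact absurd rfl hyb
      · exact h
    have hyT'' : y ∈ T'' := by
      rcases mem_insert.1 hy.2 with rfl | h
      · exact absurd rfl hyb
      · exact h
    have : y ∈ S'' ∩ T'' := mem_inter.2 ⟨hyS'', hyT''⟩
    rw [hne] at this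
    exact absurd this (notMem_empty _)

lemma Icc_erase_top (m : ℕ) : (Icc 1 m).erase m = Icc 1 (m - 1) := by
  ext x
  simp only [mem_erase, mem_Icc]
  omega

lemma card_Icc_one (m : ℕ) : (Icc 1 m).card = m := by
  rw [Nat.card_Icc]; omega



lemma crossInt_mono {A B A' B' : Finset (Finset ℕ)} (h : CrossInt A B)
    (hA : A' ⊆ A) (hB : B' ⊆ B) : CrossInt A' B' :=
  fun S hS T hT => h S (hA hS) T (hB hT)

lemma pascal {a b : ℕ} (ha : 1 ≤ a) (hb : 1 ≤ b) :
    a.choose b = (a - 1).choose (b - 1) + (a - 1).choose b := by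
  obtain ⟨a', rfl⟩ : ∃ a', a = a' + 1 := ⟨a - 1, by omega⟩
  obtain ⟨b', rfl⟩ : ∃ b', b = b' + 1 := ⟨b - 1, by omega⟩
  simp only [Nat.add_sub_cancel]
  exact Nat.choose_succ_succ a' b'

lemma choose_central {r : ℕ} (hr : 1 ≤ r) : (2 * r).choose r = 2 * ((2 * r - 1).choose (r - 1)) := by
  have h1 : (2 * r - 1).choose ((2 * r - 1) - r) = (2 * r - 1).choose r := Nat.choose_symm (by omega)
  have h2 : (2 * r).choose r = (2 * r - 1).choose (r - 1) + (2 * r - 1).choose r :=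
    pascal (by omega) hr
  have h3 : (2 * r - 1) - r = r - 1 := by omega
  rw [h3] at h1
  omega

lemma singleton_family_card {r : ℕ} {G : Finset ℕ} {H : Finset (Finset ℕ)} (hr : r = 1)
    (hH : H ⊆ powersetCard r G) (hInt : CrossInt H H) : H.card ≤ 1 := by
  apply card_le_one.2
  intro a ha b hb
  obtain ⟨x, hx⟩ := hInt a ha b hb
  rw [mem_inter] at hx
  have hac := (mem_powersetCard.1 (hH ha)).2
  have hbc := (mem_powersetCard.1 (hH hb)).2
  rw [hr] at hac hbc
  obtain ⟨y, hy⟩ := card_eq_one.1 hac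
  obtain ⟨z, hz⟩ := card_eq_one.1 hbc
  rw [hy, hz]
  rw [hy, mem_singleton] at hx
  rw [hz, mem_singleton] at hx
  rw [← hx.1, ← hx.2]

/-- Erdős–Ko–Rado for shifted families -/
theorem lemE (m r : ℕ) (H : Finset (Finset ℕ)) (hrm : 2 * r ≤ m)
    (hH : H ⊆ powersetCard r (Icc 1 m)) (hSh : ShiftedOn (Icc 1 m) H)
    (hInt : CrossInt H H) : H.card ≤ (m - 1).choose (r - 1) := by
  rcases Nat.eq_zero_or_pos r with rfl | hr0
  · have : H.card ≤ ({∅} : Finset (Finset ℕ)).card := by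
      apply card_le_card
      rwa [← powersetCard_zero (Icc 1 m)]
    simpa using this
  rcases eq_or_lt_of_le (show 1 ≤ r from hr0) with hr1 | hr2
  · calc H.card ≤ 1 := singleton_family_card hr1.symm hH hInt
      _ ≤ (m - 1).choose (r - 1) := by
        rw [← hr1]
        simp
  -- r ≥ 2
  rcases eq_or_lt_of_le hrm with hm2r | hmgt
  · -- m = 2r : pairing
    have h2 : 2 * H.card ≤ (powersetCard r (Icc 1 m)).card := by
      apply two_mul_card_le hH
      · intro S hS
        exact (mem_powersetCard.1 hS).1
      · intro S hS
        have h0 := mem_powersetCard.1 hS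
        refine mem_powersetCard.2 ⟨sdiff_subset, ?_⟩
        rw [card_sdiff_of_subset h0.1, card_Icc_one, h0.2]
        omega
      · intro S hS hmem
        obtain ⟨x, hx⟩ := hInt S hS _ hmem
        rw [inter_sdiff_self] at hx
        exact absurd hx (notMem_empty _)
    rw [card_powersetCard, card_Icc_one] at h2
    rw [← hm2r] at h2
    have := choose_central (by omega : 1 ≤ r)
    rw [← hm2r]
    omega
  -- m > 2r : peel the top element m
  have hm1 : 1 ≤ m := by omega
  have hmIcc : m ∈ Icc 1 m := mem_Icc.2 ⟨hm1, le_refl m⟩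
  have hmax : ∀ x ∈ Icc 1 m, x ≤ m := fun x hx => (mem_Icc.1 hx).2
  have herase : (Icc 1 m).erase m = Icc 1 (m - 1) := Icc_erase_top m
  -- below part
  have hbelow : (belowFam m H).card ≤ (m - 2).choose (r - 1) := by
    have h1 : belowFam m H ⊆ powersetCard r (Icc 1 (m - 1)) := by
      rw [← herase]; exact belowFam_subset hH
    have h2 : ShiftedOn (Icc 1 (m - 1)) (belowFam m H) := by
      rw [← herase]; exact shiftedOn_belowFam hSh
    have h3 : CrossInt (belowFam m H) (belowFam m H) :=
      crossInt_mono hInt (filter_subset _ _) (filter_subset _ _)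
    have := lemE (m - 1) r (belowFam m H) (by omega) h1 h2 h3
    rwa [show m - 1 - 1 = m - 2 from by omega] at this
  -- top part
  have htop : (topFam m H).card ≤ (m - 2).choose (r - 2) := by
    have h1 : topFam m H ⊆ powersetCard (r - 1) (Icc 1 (m - 1)) := by
      rw [← herase]; exact topFam_subset hH
    have h2 : ShiftedOn (Icc 1 (m - 1)) (topFam m H) := by
      rw [← herase]; exact shiftedOn_topFam hSh hmIcc
    have h3 : CrossInt (topFam m H) (topFam m H) :=
      crossInt_topFam hH hH hSh hInt (by rw [card_Icc_one]; omega) hmIcc hmax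
    have := lemE (m - 1) (r - 1) (topFam m H) (by omega) h1 h2 h3
    rwa [show m - 1 - 1 = m - 2 from by omega, show r - 1 - 1 = r - 2 from by omega] at this
  have hpascal : (m - 1).choose (r - 1) = (m - 2).choose (r - 2) + (m - 2).choose (r - 1) := by
    have := pascal (a := m - 1) (b := r - 1) (by omega) (by omega)
    rwa [show m - 1 - 1 = m - 2 from by omega, show r - 1 - 1 = r - 2 from by omega] at this
  have hpeel := card_peel m H
  omega
termination_by m



/-- Hilton–Milner cross-intersecting theorem, shifted case. -/
theorem lemXs (G : Finset ℕ) (r : ℕ) (A B : Finset (Finset ℕ)) (hr : 1 ≤ r)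
    (hrm : 2 * r ≤ G.card)
    (hA : A ⊆ powersetCard r G) (hB : B ⊆ powersetCard r G)
    (hShA : ShiftedOn G A) (hShB : ShiftedOn G B) (hX : CrossInt A B)
    (hAne : A.Nonempty) (hBne : B.Nonempty) :
    A.card + B.card ≤ G.card.choose r - (G.card - r).choose r + 1 := by
  set m := G.card with hm
  rcases eq_or_lt_of_le hr with hr1 | hr2
  · -- r = 1
    obtain ⟨T₀, hT₀⟩ := hBne
    obtain ⟨S₀, hS₀⟩ := hAne
    have hA1 : A.card ≤ 1 := by
      apply card_le_one.2
      intro a ha b hb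
      obtain ⟨x, hx⟩ := hX a ha T₀ hT₀
      obtain ⟨y, hy⟩ := hX b hb T₀ hT₀
      rw [mem_inter] at hx hy
      have hac := (mem_powersetCard.1 (hA ha)).2
      have hbc := (mem_powersetCard.1 (hA hb)).2
      have htc := (mem_powersetCard.1 (hB hT₀)).2
      rw [← hr1] at hac hbc htc
      obtain ⟨u, hu⟩ := card_eq_one.1 hac
      obtain ⟨v, hv⟩ := card_eq_one.1 hbc
      obtain ⟨w, hw⟩ := card_eq_one.1 htc
      subst hu hv hw
      obtain ⟨hx1, hx2⟩ := hx
      obtain ⟨hy1, hy2⟩ := hy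
      rw [mem_singleton] at hx1 hx2 hy1 hy2
      have : u = v := by omega
      rw [this]
    have hB1 : B.card ≤ 1 := by
      apply card_le_one.2
      intro a ha b hb
      obtain ⟨x, hx⟩ := hX S₀ hS₀ a ha
      obtain ⟨y, hy⟩ := hX S₀ hS₀ b hb
      rw [mem_inter] at hx hy
      have hac := (mem_powersetCard.1 (hB ha)).2
      have hbc := (mem_powersetCard.1 (hB hb)).2
      have hsc := (mem_powersetCard.1 (hA hS₀)).2
      rw [← hr1] at hac hbc hsc
      obtain ⟨u, hu⟩ := card_eq_one.1 hac
      obtain ⟨v, hv⟩ := card_eq_one.1 hbc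
      obtain ⟨w, hw⟩ := card_eq_one.1 hsc
      subst hu hv hw
      obtain ⟨hx1, hx2⟩ := hx
      obtain ⟨hy1, hy2⟩ := hy
      rw [mem_singleton] at hx1 hx2 hy1 hy2
      have : u = v := by omega
      rw [this]
    have e1 : m.choose 1 = m := Nat.choose_one_right m
    have e2 : (m - 1).choose 1 = m - 1 := Nat.choose_one_right (m - 1)
    rw [← hr1]
    omega
  -- now r ≥ 2
  rcases eq_or_lt_of_le hrm with hm2r | hmgt
  · -- m = 2r : complement pairing
    have hsum : A.card + B.card ≤ m.choose r := by
      have hdisj : Disjoint A (B.image fun T => G \ T) := by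
        rw [disjoint_right]
        intro S hS hSA
        obtain ⟨T, hT, rfl⟩ := mem_image.1 hS
        obtain ⟨x, hx⟩ := hX _ hSA T hT
        rw [sdiff_inter_self] at hx
        exact absurd hx (notMem_empty _)
      have hcardim : (B.image fun T => G \ T).card = B.card := by
        apply card_image_of_injOn
        intro S hS T hT h
        have hrec : ∀ U ∈ B, G \ (G \ U) = U := fun U hU =>
          sdiff_sdiff_right_self.trans (inf_eq_right.2 (mem_powersetCard.1 (hB hU)).1)
        simp only at h
        rw [← hrec S hS, ← hrec T hT, h]
      have hsub : A ∪ B.image (fun T => G \ T) ⊆ powersetCard r G := by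
        apply union_subset hA
        intro S hS
        obtain ⟨T, hT, rfl⟩ := mem_image.1 hS
        have h0 := mem_powersetCard.1 (hB hT)
        refine mem_powersetCard.2 ⟨sdiff_subset, ?_⟩
        rw [card_sdiff_of_subset h0.1, h0.2, ← hm]
        omega
      have := card_le_card hsub
      rw [card_union_of_disjoint hdisj, hcardim, card_powersetCard] at this
      exact this
    have : (m - r).choose r = 1 := by
      rw [show m - r = r from by omega]
      exact Nat.choose_self r
    omega
  -- m ≥ 2r + 1 : peel b = max G
  have hGne : G.Nonempty := card_pos.1 (by omega)
  set b := G.max' hGne with hb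
  have hbG : b ∈ G := G.max'_mem hGne
  have hbmax : ∀ x ∈ G, x ≤ b := fun x hx => G.le_max' x hx
  set G' := G.erase b with hG'
  have hG'card : G'.card = m - 1 := by rw [hG', card_erase_of_mem hbG]
  -- generic facts
  have hA'sub : belowFam b A ⊆ powersetCard r G' := belowFam_subset hA
  have hB'sub : belowFam b B ⊆ powersetCard r G' := belowFam_subset hB
  have hA''sub : topFam b A ⊆ powersetCard (r - 1) G' := topFam_subset hA
  have hB''sub : topFam b B ⊆ powersetCard (r - 1) G' := topFam_subset hB
  have hA'sh : ShiftedOn G' (belowFam b A) := shiftedOn_belowFam hShA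
  have hB'sh : ShiftedOn G' (belowFam b B) := shiftedOn_belowFam hShB
  have hA''sh : ShiftedOn G' (topFam b A) := shiftedOn_topFam hShA hbG
  have hB''sh : ShiftedOn G' (topFam b B) := shiftedOn_topFam hShB hbG
  have hX' : CrossInt (belowFam b A) (belowFam b B) :=
    crossInt_mono hX (filter_subset _ _) (filter_subset _ _)
  have hX'' : CrossInt (topFam b A) (topFam b B) :=
    crossInt_topFam hA hB hShA hX (by omega) hbG hbmax
  have hpeelA := card_peel b A
  have hpeelB := card_peel b B
  -- pascal facts
  have p1 : m.choose r = (m - 1).choose (r - 1) + (m - 1).choose r :=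
    pascal (by omega) (by omega)
  have p2 : (m - r).choose r = (m - r - 1).choose (r - 1) + (m - r - 1).choose r := by
    have := pascal (a := m - r) (b := r) (by omega) (by omega)
    rwa [show m - r - 1 = m - r - 1 from rfl, show r - 1 = r - 1 from rfl] at this
  have p3 : (m - r).choose (r - 1) = (m - r - 1).choose (r - 2) + (m - r - 1).choose (r - 1) := by
    have := pascal (a := m - r) (b := r - 1) (by omega) (by omega)
    rwa [show r - 1 - 1 = r - 2 from by omega] at this
  have p4 : 0 < (m - r - 1).choose (r - 2) := Nat.choose_pos (by omega)
  have q1 : (m - r - 1).choose r ≤ (m - 1).choose r := Nat.choose_le_choose r (by omega)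
  have q2 : (m - r).choose (r - 1) ≤ (m - 1).choose (r - 1) := Nat.choose_le_choose _ (by omega)
  have q3 : (m - r - 1).choose (r - 1) ≤ (m - 1).choose (r - 1) := Nat.choose_le_choose _ (by omega)
  have q4 : (m - r).choose r ≤ (m - 1).choose r := Nat.choose_le_choose _ (by omega)
  by_cases hBall : ∀ T ∈ B, b ∈ T
  · -- B' = ∅
    have hB'empty : belowFam b B = ∅ := by
      rw [belowFam, filter_eq_empty_iff]
      intro T hT h
      exact h (hBall T hT)
    have hB''ne : (topFam b B).Nonempty := by
      obtain ⟨T, hT⟩ := hBne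
      exact ⟨T.erase b, mem_image.2 ⟨T, mem_filter.2 ⟨hT, hBall T hT⟩, rfl⟩⟩
    obtain ⟨T₀, hT₀⟩ := hB''ne
    have hT₀G : T₀ ⊆ G' ∧ T₀.card = r - 1 := mem_powersetCard.1 (hB''sub hT₀)
    -- A' bound : every member of A' meets T₀
    have hA'bound : (belowFam b A).card ≤ (m - 1).choose r - (m - r).choose r := by
      have := card_meets_le (D := T₀) hA'sub hT₀G.1 ?_
      · rwa [hG'card, hT₀G.2, show m - 1 - (r - 1) = m - r from by omega] at this
      · intro S hS
        have hbS : b ∉ S := (mem_filter.1 hS).2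
        obtain ⟨hbT₀, hTB⟩ := mem_topFam.1 hT₀
        obtain ⟨x, hx⟩ := hX S (mem_filter.1 hS).1 _ hTB
        rw [mem_inter] at hx
        rcases mem_insert.1 hx.2 with rfl | hx2
        · exact absurd hx.1 hbS
        · exact ⟨x, mem_inter.2 ⟨hx.1, hx2⟩⟩
    rcases (topFam b A).eq_empty_or_nonempty with hA''empty | hA''ne
    · -- A = A' ; bound B'' against S₀ ∈ A
      have hA'ne : (belowFam b A).Nonempty := by
        obtain ⟨S, hS⟩ := hAne
        refine ⟨S, mem_filter.2 ⟨hS, fun hbS => ?_⟩⟩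
        have h9 : S.erase b ∈ topFam b A := mem_image.2 ⟨S, mem_filter.2 ⟨hS, hbS⟩, rfl⟩
        rw [hA''empty] at h9
        exact absurd h9 (notMem_empty _)
      obtain ⟨S₀, hS₀⟩ := hA'ne
      have hS₀G : S₀ ⊆ G' ∧ S₀.card = r := mem_powersetCard.1 (hA'sub hS₀)
      have hB''bound : (topFam b B).card ≤ (m - 1).choose (r - 1) - (m - r - 1).choose (r - 1) := by
        have := card_meets_le (D := S₀) hB''sub hS₀G.1 ?_
        · rwa [hG'card, hS₀G.2, show m - 1 - r = m - r - 1 from by omega] at this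
        · intro T hT
          obtain ⟨hbT, hTB⟩ := mem_topFam.1 hT
          have hbS₀ : b ∉ S₀ := (mem_filter.1 hS₀).2
          obtain ⟨x, hx⟩ := hX S₀ (mem_filter.1 hS₀).1 _ hTB
          rw [mem_inter] at hx
          rcases mem_insert.1 hx.2 with rfl | hx2
          · exact absurd hx.1 hbS₀
          · exact ⟨x, mem_inter.2 ⟨hx2, hx.1⟩⟩
      have e1 : (topFam b A).card = 0 := by rw [hA''empty]; rfl
      have e2 : (belowFam b B).card = 0 := by rw [hB'empty]; rfl
      omega
    · -- A'' nonempty : recurse on (A'', B'')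
      have hrec := lemXs G' (r - 1) (topFam b A) (topFam b B) (by omega)
        (by rw [hG'card]; omega) hA''sub hB''sub hA''sh hB''sh hX'' hA''ne ⟨T₀, hT₀⟩
      rw [hG'card, show m - 1 - (r - 1) = m - r from by omega] at hrec
      rw [hB'empty] at hpeelB
      simp only [card_empty] at hpeelB
      omega
  · by_cases hAall : ∀ S ∈ A, b ∈ S
    · -- A' = ∅ : symmetric to previous case
      have hA'empty : belowFam b A = ∅ := by
        rw [belowFam, filter_eq_empty_iff]
        intro T hT h
        exact h (hAall T hT)
      have hA''ne : (topFam b A).Nonempty := by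
        obtain ⟨T, hT⟩ := hAne
        exact ⟨T.erase b, mem_image.2 ⟨T, mem_filter.2 ⟨hT, hAall T hT⟩, rfl⟩⟩
      obtain ⟨S₀, hS₀⟩ := hA''ne
      have hS₀G : S₀ ⊆ G' ∧ S₀.card = r - 1 := mem_powersetCard.1 (hA''sub hS₀)
      have hB'bound : (belowFam b B).card ≤ (m - 1).choose r - (m - r).choose r := by
        have := card_meets_le (D := S₀) hB'sub hS₀G.1 ?_
        · rwa [hG'card, hS₀G.2, show m - 1 - (r - 1) = m - r from by omega] at this
        · intro T hT
          have hbT : b ∉ T := (mem_filter.1 hT).2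
          obtain ⟨hbS₀, hSA⟩ := mem_topFam.1 hS₀
          obtain ⟨x, hx⟩ := hX _ hSA T (mem_filter.1 hT).1
          rw [mem_inter] at hx
          rcases mem_insert.1 hx.1 with rfl | hx1
          · exact absurd hx.2 hbT
          · exact ⟨x, mem_inter.2 ⟨hx.2, hx1⟩⟩
      rcases (topFam b B).eq_empty_or_nonempty with hB''empty | hB''ne
      · have hB'ne : (belowFam b B).Nonempty := by
          obtain ⟨T, hT⟩ := hBne
          refine ⟨T, mem_filter.2 ⟨hT, fun hbT => ?_⟩⟩
          have : T.erase b ∈ topFam b B := mem_image.2 ⟨T, mem_filter.2 ⟨hT, hbT⟩, rfl⟩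
          rw [hB''empty] at this
          exact absurd this (notMem_empty _)
        obtain ⟨T₀, hT₀⟩ := hB'ne
        have hT₀G : T₀ ⊆ G' ∧ T₀.card = r := mem_powersetCard.1 (hB'sub hT₀)
        have hA''bound : (topFam b A).card ≤ (m - 1).choose (r - 1) - (m - r - 1).choose (r - 1) := by
          have := card_meets_le (D := T₀) hA''sub hT₀G.1 ?_
          · rwa [hG'card, hT₀G.2, show m - 1 - r = m - r - 1 from by omega] at this
          · intro S hS
            obtain ⟨hbS, hSA⟩ := mem_topFam.1 hS
            have hbT₀ : b ∉ T₀ := (mem_filter.1 hT₀).2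
            obtain ⟨x, hx⟩ := hX _ hSA T₀ (mem_filter.1 hT₀).1
            rw [mem_inter] at hx
            rcases mem_insert.1 hx.1 with rfl | hx1
            · exact absurd hx.2 hbT₀
            · exact ⟨x, mem_inter.2 ⟨hx1, hx.2⟩⟩
        have e1 : (belowFam b A).card = 0 := by rw [hA'empty]; rfl
        have e2 : (topFam b B).card = 0 := by rw [hB''empty]; rfl
        omega
      · have hA''ne' : (topFam b A).Nonempty := ⟨S₀, hS₀⟩
        have hrec := lemXs G' (r - 1) (topFam b A) (topFam b B) (by omega)
          (by rw [hG'card]; omega) hA''sub hB''sub hA''sh hB''sh hX'' hA''ne' hB''ne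
        rw [hG'card, show m - 1 - (r - 1) = m - r from by omega] at hrec
        rw [hA'empty] at hpeelA
        simp only [card_empty] at hpeelA
        omega
    · -- both A' and B' nonempty
      push_neg at hBall hAall
      obtain ⟨Ta, hTa, hTab⟩ := hBall
      obtain ⟨Sa, hSa, hSab⟩ := hAall
      have hA'ne : (belowFam b A).Nonempty := ⟨Sa, mem_filter.2 ⟨hSa, hSab⟩⟩
      have hB'ne : (belowFam b B).Nonempty := ⟨Ta, mem_filter.2 ⟨hTa, hTab⟩⟩
      have hrec1 := lemXs G' r (belowFam b A) (belowFam b B) hr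
        (by rw [hG'card]; omega) hA'sub hB'sub hA'sh hB'sh hX' hA'ne hB'ne
      rw [hG'card, show m - 1 - r = m - r - 1 from by omega] at hrec1
      rcases (topFam b A).eq_empty_or_nonempty with hA''empty | hA''ne
      · -- only bound B'' against S₀ ∈ A'
        obtain ⟨S₀, hS₀⟩ := hA'ne
        have hS₀G : S₀ ⊆ G' ∧ S₀.card = r := mem_powersetCard.1 (hA'sub hS₀)
        have hB''bound : (topFam b B).card ≤ (m - 1).choose (r - 1) - (m - r - 1).choose (r - 1) := by
          have := card_meets_le (D := S₀) hB''sub hS₀G.1 ?_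
          · rwa [hG'card, hS₀G.2, show m - 1 - r = m - r - 1 from by omega] at this
          · intro T hT
            obtain ⟨hbT, hTB⟩ := mem_topFam.1 hT
            have hbS₀ : b ∉ S₀ := (mem_filter.1 hS₀).2
            obtain ⟨x, hx⟩ := hX S₀ (mem_filter.1 hS₀).1 _ hTB
            rw [mem_inter] at hx
            rcases mem_insert.1 hx.2 with rfl | hx2
            · exact absurd hx.1 hbS₀
            · exact ⟨x, mem_inter.2 ⟨hx2, hx.1⟩⟩
        rw [hA''empty] at hpeelA
        simp only [card_empty] at hpeelA
        omega
      · rcases (topFam b B).eq_empty_or_nonempty with hB''empty | hB''ne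
        · -- bound A'' against T₀ ∈ B'
          obtain ⟨T₀, hT₀⟩ := hB'ne
          have hT₀G : T₀ ⊆ G' ∧ T₀.card = r := mem_powersetCard.1 (hB'sub hT₀)
          have hA''bound : (topFam b A).card ≤ (m - 1).choose (r - 1) - (m - r - 1).choose (r - 1) := by
            have := card_meets_le (D := T₀) hA''sub hT₀G.1 ?_
            · rwa [hG'card, hT₀G.2, show m - 1 - r = m - r - 1 from by omega] at this
            · intro S hS
              obtain ⟨hbS, hSA⟩ := mem_topFam.1 hS
              have hbT₀ : b ∉ T₀ := (mem_filter.1 hT₀).2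
              obtain ⟨x, hx⟩ := hX _ hSA T₀ (mem_filter.1 hT₀).1
              rw [mem_inter] at hx
              rcases mem_insert.1 hx.1 with rfl | hx1
              · exact absurd hx.2 hbT₀
              · exact ⟨x, mem_inter.2 ⟨hx1, hx.2⟩⟩
          rw [hB''empty] at hpeelB
          simp only [card_empty] at hpeelB
          omega
        · -- main case : recurse on both levels
          have hrec2 := lemXs G' (r - 1) (topFam b A) (topFam b B) (by omega)
            (by rw [hG'card]; omega) hA''sub hB''sub hA''sh hB''sh hX'' hA''ne hB''ne
          rw [hG'card, show m - 1 - (r - 1) = m - r from by omega] at hrec2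
          omega
termination_by G.card
decreasing_by all_goals (rw [hG'card]; omega)

/-- Hilton–Milner cross-intersecting theorem. -/
theorem lemX (G : Finset ℕ) (r : ℕ) (A B : Finset (Finset ℕ)) (hr : 1 ≤ r)
    (hrm : 2 * r ≤ G.card)
    (hA : A ⊆ powersetCard r G) (hB : B ⊆ powersetCard r G)
    (hX : CrossInt A B) (hAne : A.Nonempty) (hBne : B.Nonempty) :
    A.card + B.card ≤ G.card.choose r - (G.card - r).choose r + 1 := by
  by_cases hSh : ShiftedOn G A ∧ ShiftedOn G B
  · exact lemXs G r A B hr hrm hA hB hSh.1 hSh.2 hX hAne hBne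
  · -- find a witness pair and shift
    have hwit : ∃ i ∈ G, ∃ j ∈ G, i < j ∧ ((moved i j A).Nonempty ∨ (moved i j B).Nonempty) := by
      rcases not_and_or.1 hSh with h | h
      · rw [ShiftedOn] at h
        push_neg at h
        obtain ⟨i, hi, j, hj, hij, S, hS, hjS, hiS, hphi⟩ := h
        exact ⟨i, hi, j, hj, hij, Or.inl ⟨S, mem_moved.2 ⟨hS, hjS, hiS, hphi⟩⟩⟩
      · rw [ShiftedOn] at h
        push_neg at h
        obtain ⟨i, hi, j, hj, hij, S, hS, hjS, hiS, hphi⟩ := h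
        exact ⟨i, hi, j, hj, hij, Or.inr ⟨S, mem_moved.2 ⟨hS, hjS, hiS, hphi⟩⟩⟩
    obtain ⟨i, hi, j, hj, hij, hmv⟩ := hwit
    have hmuA := mu_shiftFam_le i j A hij
    have hmuB := mu_shiftFam_le i j B hij
    have hlt : mu (shiftFam i j A) + mu (shiftFam i j B) < mu A + mu B := by
      rcases hmv with h | h
      · have := card_pos.2 h
        omega
      · have := card_pos.2 h
        omega
    have hcA := card_shiftFam i j A (by omega)
    have hcB := card_shiftFam i j B (by omega)
    have h := lemX G r (shiftFam i j A) (shiftFam i j B) hr hrm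
      (shiftFam_subset_powersetCard hA hi) (shiftFam_subset_powersetCard hB hi)
      (crossInt_shiftFam hij hX)
      (card_pos.1 (by rw [hcA]; exact card_pos.2 hAne))
      (card_pos.1 (by rw [hcB]; exact card_pos.2 hBne))
    rw [hcA, hcB] at h
    exact h
termination_by mu A + mu B
decreasing_by exact hlt



lemma card_Icc_two (c : ℕ) : (Icc 2 (c + 1)).card = c := by
  rw [Nat.card_Icc]; omega

/-- Main lemma: shifted intersecting families all whose members meet `D = [2, c+1]`. -/
theorem lemN (c m r : ℕ) (H : Finset (Finset ℕ)) (hr : 1 ≤ r) (hrc : r ≤ c)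
    (hcm : c + 1 ≤ m) (hrm : 2 * r ≤ m)
    (hH : H ⊆ powersetCard r (Icc 1 m)) (hSh : ShiftedOn (Icc 1 m) H)
    (hInt : CrossInt H H) (hmeet : ∀ S ∈ H, (S ∩ Icc 2 (c + 1)).Nonempty) :
    (H.erase (Icc 2 (c + 1))).card ≤ (m - 1).choose (r - 1) - (m - c - 1).choose (r - 1) := by
  set D := Icc 2 (c + 1) with hD
  have hDcard : D.card = c := card_Icc_two c
  have hDsub : D ⊆ Icc 1 m := by
    intro x hx
    rw [mem_Icc] at hx ⊢
    omega
  rcases eq_or_lt_of_le hr with hr1 | hr2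
  · -- r = 1 : H must be empty
    have hHempty : H = ∅ := by
      rw [eq_empty_iff_forall_notMem]
      intro S hS
      have hcard := (mem_powersetCard.1 (hH hS)).2
      have hsub := (mem_powersetCard.1 (hH hS)).1
      rw [← hr1] at hcard
      obtain ⟨x, hx⟩ := card_eq_one.1 hcard
      obtain ⟨y, hy⟩ := hmeet S hS
      rw [mem_inter] at hy
      have hyD := mem_Icc.1 (hD ▸ hy.2)
      have hyx : y = x := by rw [hx, mem_singleton] at hy; exact hy.1
      have h1m : (1 : ℕ) ∈ Icc 1 m := mem_Icc.2 ⟨le_refl 1, by omega⟩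
      have hxm : x ∈ Icc 1 m := hsub (hx ▸ mem_singleton_self x)
      have h1x : 1 < x := by omega
      have h1S : 1 ∉ S := by
        rw [hx, mem_singleton]
        omega
      have hphi := hSh 1 h1m x hxm h1x S hS (hx ▸ mem_singleton_self x) h1S
      obtain ⟨z, hz⟩ := hmeet _ hphi
      rw [mem_inter] at hz
      have : phi 1 x S = {1} := by
        rw [phi, hx, erase_singleton, LawfulSingleton.insert_empty_eq]
      rw [this, mem_singleton] at hz
      have := mem_Icc.1 (hD ▸ hz.2)
      omega
    rw [hHempty]
    simp
  -- r ≥ 2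
  rcases eq_or_lt_of_le hcm with hmc1 | hmc2
  · -- m = c + 1 : use EKR
    have hE := lemE m r H hrm hH hSh hInt
    have h0 : m - c - 1 = 0 := by omega
    have h1 : (0 : ℕ).choose (r - 1) = 0 := Nat.choose_eq_zero_of_lt (by omega)
    have h2 : (H.erase D).card ≤ H.card := card_le_card (erase_subset _ _)
    rw [h0, h1]
    omega
  rcases eq_or_lt_of_le hrm with hm2r | hmgt
  · -- m = 2r : complement pairing
    set W := (powersetCard r (Icc 1 m)).filter (fun S => (S ∩ D).Nonempty ∧ S ≠ D) with hW
    have hsubW : H.erase D ⊆ W := by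
      intro S hS
      rw [mem_erase] at hS
      exact mem_filter.2 ⟨hH hS.2, hmeet S hS.2, hS.1⟩
    have h2card : 2 * (H.erase D).card ≤ W.card := by
      apply two_mul_card_le hsubW
      · intro S hS
        exact (mem_powersetCard.1 (mem_filter.1 hS).1).1
      · intro S hS
        obtain ⟨hSpow, hSD, hSne⟩ := mem_filter.1 hS
        have h0 := mem_powersetCard.1 hSpow
        have hnsub : ¬ D ⊆ S := by
          intro hc
          exact hSne (eq_of_subset_of_card_le hc (by rw [hDcard, h0.2]; exact hrc)).symm
        obtain ⟨x, hxD, hxS⟩ := not_subset.1 hnsub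
        refine mem_filter.2 ⟨mem_powersetCard.2 ⟨sdiff_subset, ?_⟩, ⟨x, mem_inter.2
          ⟨mem_sdiff.2 ⟨hDsub hxD, hxS⟩, hxD⟩⟩, ?_⟩
        · rw [card_sdiff_of_subset h0.1, card_Icc_one, h0.2]
          omega
        · intro hc
          obtain ⟨y, hy⟩ := hSD
          rw [mem_inter] at hy
          have : y ∈ Icc 1 m \ S := hc ▸ hy.2
          exact (mem_sdiff.1 this).2 hy.1
      · intro S hS hc
        have hS' := mem_erase.1 hS
        have hc' := mem_erase.1 hc
        obtain ⟨x, hx⟩ := hInt S hS'.2 _ hc'.2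
        rw [inter_sdiff_self] at hx
        exact absurd hx (notMem_empty _)
    -- compute |W|
    have hPcard : ((powersetCard r (Icc 1 m)).filter (fun S => (S ∩ D).Nonempty)).card
        = m.choose r - (m - c).choose r := by
      have heq : (powersetCard r (Icc 1 m)).filter (fun S => (S ∩ D).Nonempty)
          = powersetCard r (Icc 1 m) \ powersetCard r (Icc 1 m \ D) := by
        ext S
        rw [mem_filter, mem_sdiff]
        constructor
        · rintro ⟨h1, h2⟩
          refine ⟨h1, fun hc => ?_⟩
          obtain ⟨x, hx⟩ := h2
          rw [mem_inter] at hx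
          exact (mem_sdiff.1 ((mem_powersetCard.1 hc).1 hx.1)).2 hx.2
        · rintro ⟨h1, h2⟩
          refine ⟨h1, ?_⟩
          rcases (S ∩ D).eq_empty_or_nonempty with he | hne
          · exfalso
            apply h2
            refine mem_powersetCard.2 ⟨?_, (mem_powersetCard.1 h1).2⟩
            intro x hx
            refine mem_sdiff.2 ⟨(mem_powersetCard.1 h1).1 hx, fun hc => ?_⟩
            have : x ∈ S ∩ D := mem_inter.2 ⟨hx, hc⟩
            rw [he] at this
            exact absurd this (notMem_empty _)
          · exact hne
      rw [heq, card_sdiff_of_subset (powersetCard_mono sdiff_subset), card_powersetCard,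
        card_powersetCard, card_sdiff_of_subset hDsub, card_Icc_one, hDcard]
    rcases eq_or_lt_of_le hrc with hrceq | hrclt
    · -- r = c : W = P.erase D
      have hDP : D ∈ (powersetCard r (Icc 1 m)).filter (fun S => (S ∩ D).Nonempty) := by
        refine mem_filter.2 ⟨mem_powersetCard.2 ⟨hDsub, by rw [hDcard, ← hrceq]⟩, ?_⟩
        refine ⟨2, mem_inter.2 ⟨?_, ?_⟩⟩ <;>
          · rw [hD, mem_Icc]
            omega
      have hWeq : W = ((powersetCard r (Icc 1 m)).filter (fun S => (S ∩ D).Nonempty)).erase D := by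
        ext S
        rw [hW, mem_filter, mem_erase, mem_filter]
        tauto
      have hWcard : W.card = m.choose r - (m - c).choose r - 1 := by
        rw [hWeq, card_erase_of_mem hDP, hPcard]
      have e1 : (m - c).choose r = 1 := by
        rw [show m - c = r from by omega]
        exact Nat.choose_self r
      have e2 : (m - c - 1).choose (r - 1) = 1 := by
        rw [show m - c - 1 = r - 1 from by omega]
        exact Nat.choose_self _
      have e3 : m.choose r = 2 * ((m - 1).choose (r - 1)) := by
        rw [← hm2r]
        exact choose_central (by omega)
      have e4 : 1 ≤ m.choose r := Nat.choose_pos (by omega)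
      omega
    · -- r < c : W = P
      have hWeq : W = (powersetCard r (Icc 1 m)).filter (fun S => (S ∩ D).Nonempty) := by
        ext S
        rw [hW, mem_filter, mem_filter]
        constructor
        · tauto
        · rintro ⟨h1, h2⟩
          refine ⟨h1, h2, fun hc => ?_⟩
          have := (mem_powersetCard.1 h1).2
          rw [hc, hDcard] at this
          omega
      have e1 : (m - c).choose r = 0 := Nat.choose_eq_zero_of_lt (by omega)
      have e2 : (m - c - 1).choose (r - 1) = 0 := Nat.choose_eq_zero_of_lt (by omega)
      have e3 : m.choose r = 2 * ((m - 1).choose (r - 1)) := by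
        rw [← hm2r]
        exact choose_central (by omega)
      have hWcard : W.card = m.choose r - (m - c).choose r := by rw [hWeq, hPcard]
      omega
  -- m ≥ max(c+2, 2r+1) : peel m
  have hm1 : 1 ≤ m := by omega
  have hmIcc : m ∈ Icc 1 m := mem_Icc.2 ⟨hm1, le_refl m⟩
  have hmax : ∀ x ∈ Icc 1 m, x ≤ m := fun x hx => (mem_Icc.1 hx).2
  have herase : (Icc 1 m).erase m = Icc 1 (m - 1) := Icc_erase_top m
  have hmD : m ∉ D := by
    rw [hD, mem_Icc]
    omega
  -- card split of H.erase D
  have hsplit : (H.erase D).card = ((belowFam m H).erase D).card + (topFam m H).card := by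
    have e1 : belowFam m (H.erase D) = (belowFam m H).erase D := by
      ext S
      simp only [belowFam, mem_filter, mem_erase]
      tauto
    have e2 : topFam m (H.erase D) = topFam m H := by
      ext T
      simp only [mem_topFam, mem_erase]
      constructor
      · rintro ⟨h1, h2, h3⟩
        exact ⟨h1, h3⟩
      · rintro ⟨h1, h2⟩
        refine ⟨h1, fun hc => hmD ?_, h2⟩
        rw [← hc]
        exact mem_insert_self _ _
    have := card_peel m (H.erase D)
    rw [e1, e2] at this
    exact this
  -- below recursion
  have hbelow : ((belowFam m H).erase D).card ≤ (m - 2).choose (r - 1) - (m - c - 2).choose (r - 1) := by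
    have h1 : belowFam m H ⊆ powersetCard r (Icc 1 (m - 1)) := by
      rw [← herase]; exact belowFam_subset hH
    have h2 : ShiftedOn (Icc 1 (m - 1)) (belowFam m H) := by
      rw [← herase]; exact shiftedOn_belowFam hSh
    have h3 : CrossInt (belowFam m H) (belowFam m H) :=
      crossInt_mono hInt (filter_subset _ _) (filter_subset _ _)
    have h4 : ∀ S ∈ belowFam m H, (S ∩ D).Nonempty := fun S hS => hmeet S (mem_filter.1 hS).1
    have := lemN c (m - 1) r (belowFam m H) hr hrc (by omega) (by omega) h1 h2 h3 h4
    rwa [show m - 1 - 1 = m - 2 from by omega, show m - 1 - c - 1 = m - c - 2 from by omega] at this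
  -- top recursion
  have htop : (topFam m H).card ≤ (m - 2).choose (r - 2) - (m - c - 2).choose (r - 2) := by
    have h1 : topFam m H ⊆ powersetCard (r - 1) (Icc 1 (m - 1)) := by
      rw [← herase]; exact topFam_subset hH
    have h2 : ShiftedOn (Icc 1 (m - 1)) (topFam m H) := by
      rw [← herase]; exact shiftedOn_topFam hSh hmIcc
    have h3 : CrossInt (topFam m H) (topFam m H) :=
      crossInt_topFam hH hH hSh hInt (by rw [card_Icc_one]; omega) hmIcc hmax
    have h4 : ∀ T ∈ topFam m H, (T ∩ D).Nonempty := by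
      intro T hT
      obtain ⟨h5, h6⟩ := mem_topFam.1 hT
      obtain ⟨x, hx⟩ := hmeet _ h6
      rw [mem_inter] at hx
      rcases mem_insert.1 hx.1 with rfl | h7
      · exact absurd hx.2 hmD
      · exact ⟨x, mem_inter.2 ⟨h7, hx.2⟩⟩
    have hDnot : D ∉ topFam m H := by
      intro hc
      have := (mem_powersetCard.1 (h1 hc)).2
      rw [hDcard] at this
      omega
    have := lemN c (m - 1) (r - 1) (topFam m H) (by omega) (by omega) (by omega) (by omega)
      h1 h2 h3 h4
    rwa [erase_eq_of_notMem hDnot, show m - 1 - 1 = m - 2 from by omega,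
      show r - 1 - 1 = r - 2 from by omega, show m - 1 - c - 1 = m - c - 2 from by omega] at this
  -- combine with Pascal
  have pa1 : (m - 1).choose (r - 1) = (m - 2).choose (r - 2) + (m - 2).choose (r - 1) := by
    have := pascal (a := m - 1) (b := r - 1) (by omega) (by omega)
    rwa [show m - 1 - 1 = m - 2 from by omega, show r - 1 - 1 = r - 2 from by omega] at this
  have pa2 : (m - c - 1).choose (r - 1) = (m - c - 2).choose (r - 2) + (m - c - 2).choose (r - 1) := by
    have := pascal (a := m - c - 1) (b := r - 1) (by omega) (by omega)
    rwa [show m - c - 1 - 1 = m - c - 2 from by omega, show r - 1 - 1 = r - 2 from by omega] at this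
  have q1 : (m - c - 2).choose (r - 1) ≤ (m - 2).choose (r - 1) := Nat.choose_le_choose _ (by omega)
  have q2 : (m - c - 2).choose (r - 2) ≤ (m - 2).choose (r - 2) := Nat.choose_le_choose _ (by omega)
  omega
termination_by m

/-- in a shifted family with a member avoiding 1, the set [2, k+1] is a member -/
theorem D_mem (n k : ℕ) (F : Finset (Finset ℕ)) (hSh : ShiftedOn (Icc 1 n) F)
    (hF : F ⊆ powersetCard k (Icc 1 n)) (hkn : k + 1 ≤ n)
    (G₀ : Finset ℕ) (hG₀ : G₀ ∈ F) (h1 : 1 ∉ G₀) : Icc 2 (k + 1) ∈ F := by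
  by_cases heq : G₀ = Icc 2 (k + 1)
  · exact heq ▸ hG₀
  · have hcard := (mem_powersetCard.1 (hF hG₀)).2
    have hsub := (mem_powersetCard.1 (hF hG₀)).1
    have hIcard : (Icc 2 (k + 1)).card = k := card_Icc_two k
    have hnotsub : ¬ G₀ ⊆ Icc 2 (k + 1) := by
      intro hc
      exact heq (eq_of_subset_of_card_le hc (by omega))
    have hnotsub2 : ¬ Icc 2 (k + 1) ⊆ G₀ := by
      intro hc
      exact heq (eq_of_subset_of_card_le hc (by omega)).symm
    obtain ⟨j, hjG, hjI⟩ := not_subset.1 hnotsub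
    obtain ⟨i, hiI, hiG⟩ := not_subset.1 hnotsub2
    have hjm := mem_Icc.1 (hsub hjG)
    have hj1 : j ≠ 1 := fun hc => h1 (hc ▸ hjG)
    have hjI' : ¬ (2 ≤ j ∧ j ≤ k + 1) := fun hc => hjI (mem_Icc.2 hc)
    have hiI' := mem_Icc.1 hiI
    have hij : i < j := by omega
    have hiIcc : i ∈ Icc 1 n := mem_Icc.2 ⟨by omega, by omega⟩
    have hjIcc : j ∈ Icc 1 n := hsub hjG
    have hphi := hSh i hiIcc j hjIcc hij G₀ hG₀ hjG hiG
    have h1' : 1 ∉ phi i j G₀ := by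
      intro hc
      rcases mem_insert.1 hc with hc1 | hc2
      · omega
      · exact h1 (mem_of_mem_erase hc2)
    have hwt := wt_phi_add hjG hiG
    have hdec : wt (phi i j G₀) < wt G₀ := by omega
    exact D_mem n k F hSh hF hkn (phi i j G₀) hphi h1'
termination_by wt G₀

/-- Hilton–Milner, internal version -/
theorem outer (n k : ℕ) (F : Finset (Finset ℕ)) (hk : 2 ≤ k) (hn : 2 * k < n)
    (hF : F ⊆ powersetCard k (Icc 1 n)) (hInt : CrossInt F F)
    (hnt : ∀ x : ℕ, ∃ A ∈ F, x ∉ A) :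
    F.card ≤ (n - 1).choose (k - 1) - (n - k - 1).choose (k - 1) + 1 := by
  by_cases hSh : ShiftedOn (Icc 1 n) F
  · -- shifted case
    obtain ⟨G₀, hG₀, h1G₀⟩ := hnt 1
    have hD : Icc 2 (k + 1) ∈ F := D_mem n k F hSh hF (by omega) G₀ hG₀ h1G₀
    have hmeet : ∀ S ∈ F, (S ∩ Icc 2 (k + 1)).Nonempty := fun S hS => hInt S hS _ hD
    have hbound := lemN k n k F (by omega) (le_refl k) (by omega) (by omega) hF hSh hInt hmeet
    have hcard : (F.erase (Icc 2 (k + 1))).card = F.card - 1 := card_erase_of_mem hD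
    have hpos : 0 < F.card := card_pos.2 ⟨_, hD⟩
    omega
  · -- not shifted : shift it
    rw [ShiftedOn] at hSh
    push_neg at hSh
    obtain ⟨i, hi, j, hj, hij, S, hS, hjS, hiS, hphi⟩ := hSh
    set F₂ := shiftFam i j F with hF₂
    have hmv : S ∈ moved i j F := mem_moved.2 ⟨hS, hjS, hiS, hphi⟩
    have hcF₂ : F₂.card = F.card := card_shiftFam i j F (by omega)
    by_cases hnt₂ : ∀ x : ℕ, ∃ A ∈ F₂, x ∉ A
    · -- still nontrivial : recurse
      have hmu := mu_shiftFam_le i j F hij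
      have hmvpos := card_pos.2 ⟨S, hmv⟩
      have hlt : mu F₂ < mu F := by
        rw [hF₂]
        omega
      have := outer n k F₂ hk hn (shiftFam_subset_powersetCard hF hi)
        (crossInt_shiftFam hij hInt) hnt₂
      omega
    · -- F₂ is a star : terminal case
      push_neg at hnt₂
      obtain ⟨x, hx⟩ := hnt₂
      -- x = i
      have hxi : x = i := by
        by_contra hxi
        obtain ⟨B, hB, hxB⟩ := hnt x
        by_cases hBmv : B ∈ moved i j F
        · have : phi i j B ∈ F₂ := mem_shiftFam.2 (Or.inr ⟨B, hBmv, rfl⟩)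
          have hxphi := hx _ this
          rcases mem_insert.1 hxphi with hc | hc
          · exact hxi hc
          · exact hxB (mem_of_mem_erase hc)
        · exact hxB (hx B (mem_shiftFam.2 (Or.inl ⟨hB, hBmv⟩)))
      rw [hxi] at hx
      clear hxi
      -- members avoiding i
      set M := F.filter (fun S => i ∉ S) with hM
      have hMprop : ∀ T ∈ M, j ∈ T ∧ phi i j T ∉ F := by
        intro T hT
        obtain ⟨hTF, hiT⟩ := mem_filter.1 hT
        by_cases hTmv : T ∈ moved i j F
        · have := mem_moved.1 hTmv
          exact ⟨this.2.1, this.2.2.2⟩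
        · exact absurd (hx T (mem_shiftFam.2 (Or.inl ⟨hTF, hTmv⟩))) hiT
      -- a member avoiding j (contains i)
      obtain ⟨A₀, hA₀F, hjA₀⟩ := hnt j
      have hiA₀ : i ∈ A₀ := by
        by_contra hc
        exact hjA₀ (hMprop A₀ (mem_filter.2 ⟨hA₀F, hc⟩)).1
      -- M is nonempty
      obtain ⟨C₀, hC₀F, hiC₀⟩ := hnt i
      have hC₀M : C₀ ∈ M := mem_filter.2 ⟨hC₀F, hiC₀⟩
      -- ground set for the cross-intersecting families
      set G2 := ((Icc 1 n).erase i).erase j with hG2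
      have hiIcc : i ∈ Icc 1 n := hi
      have hjIcc : j ∈ Icc 1 n := hj
      have hG2card : G2.card = n - 2 := by
        rw [hG2, card_erase_of_mem (mem_erase.2 ⟨by omega, hjIcc⟩), card_erase_of_mem hiIcc,
          card_Icc_one]
        omega
      set XA := (F.filter (fun S => i ∈ S ∧ j ∉ S)).image (fun S => S.erase i) with hXA
      set XB := M.image (fun S => S.erase j) with hXB
      have hXAcard : XA.card = (F.filter (fun S => i ∈ S ∧ j ∉ S)).card := by
        apply card_image_of_injOn
        intro S hS T hT h
        have h' : S.erase i = T.erase i := h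
        rw [← insert_erase (mem_filter.1 hS).2.1, ← insert_erase (mem_filter.1 hT).2.1, h']
      have hXBcard : XB.card = M.card := by
        apply card_image_of_injOn
        intro S hS T hT h
        have h' : S.erase j = T.erase j := h
        rw [← insert_erase (hMprop S hS).1, ← insert_erase (hMprop T hT).1, h']
      have hXAsub : XA ⊆ powersetCard (k - 1) G2 := by
        intro T hT
        obtain ⟨S, hS, rfl⟩ := mem_image.1 hT
        obtain ⟨hSF, hiS', hjS'⟩ := mem_filter.1 hS
        have h0 := mem_powersetCard.1 (hF hSF)
        refine mem_powersetCard.2 ⟨?_, ?_⟩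
        · rw [hG2]
          refine subset_erase.2 ⟨erase_subset_erase _ h0.1, fun hc => hjS' (mem_of_mem_erase hc)⟩
        · rw [card_erase_of_mem hiS', h0.2]
      have hXBsub : XB ⊆ powersetCard (k - 1) G2 := by
        intro T hT
        obtain ⟨S, hS, rfl⟩ := mem_image.1 hT
        have hjS' := (hMprop S hS).1
        obtain ⟨hSF, hiS'⟩ := mem_filter.1 hS
        have h0 := mem_powersetCard.1 (hF hSF)
        refine mem_powersetCard.2 ⟨?_, ?_⟩
        · rw [hG2]
          refine subset_erase.2 ⟨subset_erase.2 ⟨(erase_subset _ _).trans h0.1, fun hc => hiS' (mem_of_mem_erase hc)⟩, notMem_erase _ _⟩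
        · rw [card_erase_of_mem hjS', h0.2]
      have hcross : CrossInt XA XB := by
        intro S' hS' T' hT'
        obtain ⟨S, hS, rfl⟩ := mem_image.1 hS'
        obtain ⟨T, hT, rfl⟩ := mem_image.1 hT'
        obtain ⟨hSF, hiS', hjS'⟩ := mem_filter.1 hS
        have hiT' := (mem_filter.1 hT).2
        obtain ⟨y, hy⟩ := hInt S hSF T (mem_filter.1 hT).1
        rw [mem_inter] at hy
        have hyi : y ≠ i := fun hc => hiT' (hc ▸ hy.2)
        have hyj : y ≠ j := fun hc => hjS' (hc ▸ hy.1)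
        exact ⟨y, mem_inter.2 ⟨mem_erase.2 ⟨hyi, hy.1⟩, mem_erase.2 ⟨hyj, hy.2⟩⟩⟩
      have hXAne : XA.Nonempty :=
        ⟨A₀.erase i, mem_image.2 ⟨A₀, mem_filter.2 ⟨hA₀F, hiA₀, hjA₀⟩, rfl⟩⟩
      have hXBne : XB.Nonempty := ⟨C₀.erase j, mem_image.2 ⟨C₀, hC₀M, rfl⟩⟩
      have hcrossbound := lemX G2 (k - 1) XA XB (by omega) (by rw [hG2card]; omega)
        hXAsub hXBsub hcross hXAne hXBne
      rw [hG2card, show n - 2 - (k - 1) = n - k - 1 from by omega] at hcrossbound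
      -- two-star part
      have hYbound : (F.filter (fun S => i ∈ S ∧ j ∈ S)).card ≤ (n - 2).choose (k - 2) := by
        have := card_two_star_le (G := Icc 1 n) (r := k) (i := i) (j := j)
          (H := F.filter (fun S => i ∈ S ∧ j ∈ S)) (by omega)
          ((filter_subset _ _).trans hF) (fun S hS => (mem_filter.1 hS).2)
        rwa [card_Icc_one] at this
      -- partition of F
      have hpart1 := card_filter_add_card_filter_not (s := F) (p := fun S => i ∈ S)
      have hpart2 := card_filter_add_card_filter_not
        (s := F.filter (fun S => i ∈ S)) (p := fun S => j ∈ S)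
      rw [filter_filter, filter_filter] at hpart2
      have hMcard : (F.filter (fun S => ¬ i ∈ S)).card = M.card := by rw [hM]
      -- final arithmetic
      have pas : (n - 1).choose (k - 1) = (n - 2).choose (k - 2) + (n - 2).choose (k - 1) := by
        have := pascal (a := n - 1) (b := k - 1) (by omega) (by omega)
        rwa [show n - 1 - 1 = n - 2 from by omega, show k - 1 - 1 = k - 2 from by omega] at this
      have mono : (n - k - 1).choose (k - 1) ≤ (n - 2).choose (k - 1) :=
        Nat.choose_le_choose _ (by omega)
      omega
termination_by mu F
decreasing_by exact hlt

end HM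

/-- Hilton–Milner theorem. -/
theorem stmt1 (n k : ℕ) (hk : 2 ≤ k) (hn : 2 * k < n)
    (F : Finset (Finset ℕ)) (hF : F ⊆ (Finset.Icc 1 n).powersetCard k)
    (hint : ∀ A ∈ F, ∀ B ∈ F, (A ∩ B).Nonempty)
    (hnt : ∀ x : ℕ, ∃ A ∈ F, x ∉ A) :
    F.card ≤ (n - 1).choose (k - 1) - (n - k - 1).choose (k - 1) + 1 := by
  exact HM.outer n k F hk hn hF (fun S hS T hT => hint S hS T hT) hnt
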